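/- Let X be a full subcategory of the category of finitely generated right Λ-modules over an artin algebra Λ, closed under extensions and under cokernels of injections. Then a module X in X is splitting injective in X (i.e., every monomorphism X → Y with Y in add X splits) if and only if X is Ext-injective in add X (i.e., Ext^1_Λ(W, X) = 0 for all W in X). -/

import Mathlib

open CategoryTheory

universe u

/-- The `n`-th Ext group of `A`-modules `M`, `N`. -/
noncomputable abbrev ext {A : Type u} [Ring A] (M N : ModuleCat.{u} A) (n : ℕ) : Type u :=
  ((Ext ℤ (ModuleCat.{u} A) n).obj (Opposite.op M)).obj N

/-- `Ext^i(N, M) = 0` for all `i > 0`. -/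
def ExtVanish {A : Type u} [Ring A] (N M : ModuleCat.{u} A) : Prop :=
  ∀ i, 0 < i → Subsingleton (ext N M i)

/-- `M` has projective dimension at most `n`, i.e. `Ext^i(M, -) = 0` for `i > n`. -/
def pdLE {A : Type u} [Ring A] (M : ModuleCat.{u} A) (n : ℕ) : Prop :=
  ∀ i, n < i → ∀ N : ModuleCat.{u} A, Subsingleton (ext M N i)

/-- The projective dimension of `M`, as an element of `ℕ∞` (`⊤` if infinite). -/
noncomputable def projDim {A : Type u} [Ring A] (M : ModuleCat.{u} A) : ℕ∞ :=
  sInf {d : ℕ∞ | ∃ n : ℕ, d = n ∧ pdLE M n}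

/-- Membership in `𝒫`: finitely generated of finite projective dimension. -/
def InP {A : Type u} [Ring A] (M : ModuleCat.{u} A) : Prop :=
  Module.Finite A M ∧ ∃ n, pdLE M n

/-- The finitistic dimension of `A`. -/
noncomputable def findim (A : Type u) [Ring A] : ℕ∞ :=
  sSup {d : ℕ∞ | ∃ M : ModuleCat.{u} A, InP M ∧ d = projDim M}

/-- `M` is a direct summand of `S`. -/
def IsSummand {A : Type u} [Ring A] (M S : ModuleCat.{u} A) : Prop :=
  ∃ (s : M →ₗ[A] S) (r : S →ₗ[A] M), r ∘ₗ s = LinearMap.id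

/-- `M` belongs to `add 𝒳`: `M` is a direct summand of a finite direct sum of objects of `𝒳`. -/
def InAddOf {A : Type u} [Ring A] (X : ModuleCat.{u} A → Prop) (M : ModuleCat.{u} A) : Prop :=
  ∃ (k : ℕ) (F : Fin k → ModuleCat.{u} A), (∀ i, X (F i)) ∧
    IsSummand M (ModuleCat.of A (DirectSum (Fin k) (fun i => ↥(F i))))

/-- `M` belongs to `Add T`: `M` is a direct summand of an arbitrary direct sum of copies of `T`. -/
def InAdd {A : Type u} [Ring A] (T M : ModuleCat.{u} A) : Prop :=
  ∃ ι : Type u, IsSummand M (ModuleCat.of A (DirectSum ι (fun _ => ↥T)))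

/-- `M ∈ 𝒳^⊥`: `Ext^i(N, M) = 0` for all `N ∈ 𝒳` and `i > 0`. -/
def InPerpOf {A : Type u} [Ring A] (X : ModuleCat.{u} A → Prop) (M : ModuleCat.{u} A) : Prop :=
  ∀ N, X N → ExtVanish N M

/-- `M` is Ext-injective in `𝒫`: `M ∈ 𝒫` and `Ext^1(N, M) = 0` for all `N ∈ 𝒫`. -/
def ExtInjInP {A : Type u} [Ring A] (M : ModuleCat.{u} A) : Prop :=
  InP M ∧ ∀ N : ModuleCat.{u} A, InP N → Subsingleton (ext N M 1)

/-- `M` is splitting injective in `𝒳`: every injective map `M → Y` with `Y ∈ add 𝒳` splits. -/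
def SplittingInjIn {A : Type u} [Ring A] (X : ModuleCat.{u} A → Prop)
    (M : ModuleCat.{u} A) : Prop :=
  ∀ Y : ModuleCat.{u} A, InAddOf X Y → ∀ f : M →ₗ[A] Y, Function.Injective f →
    ∃ r : Y →ₗ[A] M, r ∘ₗ f = LinearMap.id

/-- `0 → M₁ → M₂ → M₃ → 0` is a short exact sequence. -/
def ShortExact {A : Type u} [Ring A] {M₁ M₂ M₃ : ModuleCat.{u} A}
    (f : M₁ →ₗ[A] M₂) (g : M₂ →ₗ[A] M₃) : Prop :=
  Function.Injective f ∧ Function.Exact f g ∧ Function.Surjective g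

/-- `f : XM → M` is a right `𝒳`-approximation of `M`. -/
def IsRightApprox {A : Type u} [Ring A] (X : ModuleCat.{u} A → Prop)
    {XM M : ModuleCat.{u} A} (f : XM →ₗ[A] M) : Prop :=
  X XM ∧ ∀ Y : ModuleCat.{u} A, X Y → ∀ g : Y →ₗ[A] M, ∃ h : Y →ₗ[A] XM, f ∘ₗ h = g

/-- `f : XM → M` is a minimal right `𝒳`-approximation. -/
def IsMinimalRightApprox {A : Type u} [Ring A] (X : ModuleCat.{u} A → Prop)
    {XM M : ModuleCat.{u} A} (f : XM →ₗ[A] M) : Prop :=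
  IsRightApprox X f ∧ ∀ g : XM →ₗ[A] XM, f ∘ₗ g = f → Function.Bijective g

/-- `𝒳` is contravariantly finite in `mod A`. -/
def ContravariantlyFinite {A : Type u} [Ring A] (X : ModuleCat.{u} A → Prop) : Prop :=
  ∀ M : ModuleCat.{u} A, Module.Finite A M →
    ∃ (XM : ModuleCat.{u} A) (f : XM →ₗ[A] M), IsRightApprox X f

/-- `M` is an indecomposable module: nonzero, and its only idempotent endomorphisms
are `0` and the identity. -/
def Indec {A : Type u} [Ring A] (M : ModuleCat.{u} A) : Prop :=
  (¬ Subsingleton M) ∧ ∀ e : M →ₗ[A] M, e ∘ₗ e = e → e = 0 ∨ e = LinearMap.id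

/-- `L` admits a finite coresolution `0 → L → C^0 → ⋯ → C^n → 0` with all `C^i ∈ add T`. -/
def HasAddCoresolution {A : Type u} [Ring A] (T L : ModuleCat.{u} A) : Prop :=
  ∃ (C : ℕ → ModuleCat.{u} A) (d : ∀ i, C i →ₗ[A] C (i+1)) (f : L →ₗ[A] C 0),
    Function.Injective f ∧ Function.Exact f (d 0) ∧
    (∀ i, Function.Exact (d i) (d (i+1))) ∧
    (∀ i, InAddOf (fun X => X = T) (C i)) ∧
    (∃ m, ∀ i, m ≤ i → Subsingleton (C i))

/-- `T` is a tilting `A`-module. -/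
def IsTilting {A : Type u} [Ring A] (T : ModuleCat.{u} A) : Prop :=
  Module.Finite A T ∧ (∃ n, pdLE T n) ∧ ExtVanish T T ∧
    HasAddCoresolution T (ModuleCat.of A A)

/-- `𝒳` is a resolving subcategory of `mod A`. -/
def Resolving {A : Type u} [Ring A] (X : ModuleCat.{u} A → Prop) : Prop :=
  (∀ M : ModuleCat.{u} A, Module.Finite A M → Module.Projective A M → X M) ∧
  (∀ (M₁ M₂ M₃ : ModuleCat.{u} A) (f : M₁ →ₗ[A] M₂) (g : M₂ →ₗ[A] M₃),
      ShortExact f g → X M₁ → X M₃ → X M₂) ∧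
  (∀ (M₁ M₂ M₃ : ModuleCat.{u} A) (f : M₁ →ₗ[A] M₂) (g : M₂ →ₗ[A] M₃),
      ShortExact f g → X M₂ → X M₃ → X M₁)

/-- `F` is a complete irredundant family of representatives of the isomorphism classes of
indecomposable Ext-injective modules in `𝒫`. -/
def IsCompleteExtInjFamily {A : Type u} [Ring A] {ι : Type u}
    (F : ι → ModuleCat.{u} A) : Prop :=
  (∀ i, Indec (F i) ∧ ExtInjInP (F i)) ∧
  (∀ M : ModuleCat.{u} A, Indec M → ExtInjInP M → ∃ i, Nonempty (M ≃ₗ[A] F i)) ∧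
  (∀ i j, Nonempty (F i ≃ₗ[A] F j) → i = j)

/-- `I` is a complete set of pairwise non-isomorphic indecomposable injective modules. -/
def IsCompleteIndecInjFamily {A : Type u} [Ring A] {n : ℕ}
    (I : Fin n → ModuleCat.{u} A) : Prop :=
  (∀ j, Module.Finite A (I j) ∧ Module.Injective A (I j) ∧ Indec (I j)) ∧
  (∀ M : ModuleCat.{u} A, Module.Finite A M → Module.Injective A M → Indec M →
      ∃ j, Nonempty (M ≃ₗ[A] I j)) ∧
  (∀ j k, Nonempty (I j ≃ₗ[A] I k) → j = k)



universe v w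

lemma subsing_iff_isZero' {R : Type v} [Ring R] (N : ModuleCat.{w} R) :
    Subsingleton N ↔ Limits.IsZero N := by
  constructor
  · intro h; exact ModuleCat.isZero_of_subsingleton N
  · intro h
    have hz : ∀ x : N, x = 0 := by
      intro x
      have h1 : (𝟙 N : N ⟶ N) = 0 := h.eq_of_src _ _
      have := congrArg (fun g : N ⟶ N => g.hom x) h1
      simpa using this
    exact ⟨fun a b => by rw [hz a, hz b]⟩

lemma ext1_iff' {A : Type u} [Ring A] (W M : ModuleCat.{u} A) (P : ProjectiveResolution W) :
    Subsingleton (ext W M 1) ↔ ∀ φ : P.complex.X 1 ⟶ M, P.complex.d 2 1 ≫ φ = 0 →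
      ∃ ψ : P.complex.X 0 ⟶ M, P.complex.d 1 0 ≫ ψ = φ := by
  have e := P.isoExt (R := ℤ) 1 M
  set K := P.complex.linearYonedaObj ℤ M with hK
  have h1 : Subsingleton (ext W M 1) ↔ Subsingleton (K.homology 1) :=
    Equiv.subsingleton_congr ((forget (ModuleCat ℤ)).mapIso e).toEquiv
  rw [h1, subsing_iff_isZero', ← HomologicalComplex.exactAt_iff_isZero_homology,
    HomologicalComplex.exactAt_iff' K 0 1 2 (by simp) (by simp)]
  rw [ShortComplex.moduleCat_exact_iff]
  constructor
  · intro h φ hφ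
    obtain ⟨ψ, hψ⟩ := h φ hφ
    exact ⟨ψ, hψ⟩
  · intro h x hx
    obtain ⟨ψ, hψ⟩ := h x hx
    exact ⟨ψ, hψ⟩

/-- pi over `Fin (n+1)` splits as a product. -/
def piFinSuccLinear (R : Type v) [Semiring R] (n : ℕ) (G : Fin (n+1) → Type w)
    [∀ i, AddCommMonoid (G i)] [∀ i, Module R (G i)] :
    ((i : Fin (n+1)) → G i) ≃ₗ[R] G 0 × ((i : Fin n) → G i.succ) where
  toFun f := (f 0, fun i => f i.succ)
  invFun p := Fin.cons p.1 p.2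
  map_add' _ _ := rfl
  map_smul' _ _ := rfl
  left_inv f := by
    funext i
    refine Fin.cases ?_ ?_ i
    · simp
    · intro j; simp
  right_inv p := by
    refine Prod.ext ?_ ?_
    · simp
    · funext j; simp

section facts
variable {A : Type u} [Ring A]

lemma res_pi0_surj (W : ModuleCat.{u} A) (P : ProjectiveResolution W) :
    Function.Surjective (P.π.f 0) := by
  rw [← ModuleCat.epi_iff_surjective]; infer_instance

lemma res_range_d10 (W : ModuleCat.{u} A) (P : ProjectiveResolution W) :
    LinearMap.range (P.complex.d 1 0).hom = LinearMap.ker (P.π.f 0).hom := by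
  have h := ShortComplex.exact_of_g_is_cokernel
    (S := ShortComplex.mk (P.complex.d 1 0) (P.π.f 0) (P.complex_d_comp_π_f_zero))
    P.isColimitCokernelCofork
  exact (ShortComplex.moduleCat_exact_iff_range_eq_ker _).mp h

lemma res_range_d21 (W : ModuleCat.{u} A) (P : ProjectiveResolution W) :
    LinearMap.range (P.complex.d 2 1).hom = LinearMap.ker (P.complex.d 1 0).hom :=
  (ShortComplex.moduleCat_exact_iff_range_eq_ker _).mp (P.exact_succ 0)

end facts

/-- In a subcategory `𝒳` of `mod Λ` closed under extensions and cokernels of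
injections, a module of `𝒳` is splitting injective in `𝒳` iff it is Ext-injective in `add 𝒳`. -/
theorem stmt_0 (Λ : Type u) [Ring Λ] (R : Type u) [CommRing R] [IsArtinianRing R]
    [Algebra R Λ] [Module.Finite R Λ]
    (X : ModuleCat.{u} Λᵐᵒᵖ → Prop)
    (hfg : ∀ M : ModuleCat.{u} Λᵐᵒᵖ, X M → Module.Finite Λᵐᵒᵖ M)
    (hext : ∀ (M₁ M₂ M₃ : ModuleCat.{u} Λᵐᵒᵖ) (f : M₁ →ₗ[Λᵐᵒᵖ] M₂) (g : M₂ →ₗ[Λᵐᵒᵖ] M₃),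
      ShortExact f g → X M₁ → X M₃ → X M₂)
    (hcoker : ∀ (M₁ M₂ M₃ : ModuleCat.{u} Λᵐᵒᵖ) (f : M₁ →ₗ[Λᵐᵒᵖ] M₂) (g : M₂ →ₗ[Λᵐᵒᵖ] M₃),
      ShortExact f g → X M₁ → X M₂ → X M₃)
    (M : ModuleCat.{u} Λᵐᵒᵖ) (hM : X M) :
    SplittingInjIn X M ↔ ∀ W : ModuleCat.{u} Λᵐᵒᵖ, X W → Subsingleton (ext W M 1) := by
  classical
  -- Closure of X under various operations
  have hXsub : ∀ (Z : ModuleCat.{u} Λᵐᵒᵖ), Subsingleton Z → X Z := by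
    intro Z hZ
    refine hcoker M M Z LinearMap.id 0 ⟨fun a b h => h, ?_, fun z => ⟨0, Subsingleton.elim _ _⟩⟩
      hM hM
    intro y
    constructor
    · intro _; exact ⟨y, rfl⟩
    · intro _; rfl
  have hXiso : ∀ (N₁ N₂ : ModuleCat.{u} Λᵐᵒᵖ), (N₁ ≃ₗ[Λᵐᵒᵖ] N₂) → X N₁ → X N₂ := by
    intro N₁ N₂ e h1
    refine hcoker (ModuleCat.of Λᵐᵒᵖ PUnit) N₁ N₂ 0 e.toLinearMap
      ⟨fun a b _ => Subsingleton.elim a b, ?_, e.surjective⟩ (hXsub _ inferInstance) h1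
    intro y
    constructor
    · intro hy
      refine ⟨0, ?_⟩
      have : y = 0 := by
        apply e.injective
        simpa using hy
      simp [this]
    · rintro ⟨x, rfl⟩
      simp
  have hXprod : ∀ (N₁ N₂ : ModuleCat.{u} Λᵐᵒᵖ), X N₁ → X N₂ →
      X (ModuleCat.of Λᵐᵒᵖ (↥N₁ × ↥N₂)) := by
    intro N₁ N₂ h1 h2
    refine hext N₁ (ModuleCat.of Λᵐᵒᵖ (↥N₁ × ↥N₂)) N₂ (LinearMap.inl _ _ _)
      (LinearMap.snd _ _ _) ⟨LinearMap.inl_injective, ?_, fun n => ⟨(0, n), rfl⟩⟩ h1 h2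
    intro p
    constructor
    · intro hp
      exact ⟨p.1, Prod.ext rfl hp.symm⟩
    · rintro ⟨m, rfl⟩; rfl
  have hXsum : ∀ (k : ℕ) (F : Fin k → ModuleCat.{u} Λᵐᵒᵖ), (∀ i, X (F i)) →
      X (ModuleCat.of Λᵐᵒᵖ (DirectSum (Fin k) (fun i => ↥(F i)))) := by
    intro k
    induction k with
    | zero =>
      intro F hF
      refine hXsub _ ⟨fun a b => DFinsupp.ext fun i => i.elim0⟩
    | succ n ih =>
      intro F hF
      have e1 := DirectSum.linearEquivFunOnFintype Λᵐᵒᵖ (Fin (n+1)) (fun i => ↥(F i))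
      have e2 := piFinSuccLinear Λᵐᵒᵖ n (fun i => ↥(F i))
      have e3 := DirectSum.linearEquivFunOnFintype Λᵐᵒᵖ (Fin n) (fun i => ↥(F i.succ))
      have hX' := hXprod (F 0) (ModuleCat.of _ (DirectSum (Fin n) fun i => ↥(F i.succ)))
        (hF 0) (ih _ fun i => hF i.succ)
      exact hXiso _ _
        ((e1.trans (e2.trans (LinearEquiv.prodCongr (LinearEquiv.refl _ _) e3.symm))).symm) hX'
  constructor
  · -- splitting injective → Ext-injective
    intro hsplit W hW
    obtain ⟨P⟩ : Nonempty (ProjectiveResolution W) := HasProjectiveResolution.out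
    rw [ext1_iff' W M P]
    intro φ hφ
    set d10 := P.complex.d 1 0 with hd10
    set π₀ := P.π.f 0 with hπ₀
    have hπ : Function.Surjective π₀ := res_pi0_surj W P
    have hker0 : LinearMap.range d10.hom = LinearMap.ker π₀.hom := res_range_d10 W P
    have hker1 : LinearMap.range (P.complex.d 2 1).hom = LinearMap.ker d10.hom := res_range_d21 W P
    set N : Submodule Λᵐᵒᵖ (↥M × ↥(P.complex.X 0)) :=
      LinearMap.range (LinearMap.prod φ.hom (-d10.hom)) with hN
    set E := ModuleCat.of Λᵐᵒᵖ ((↥M × ↥(P.complex.X 0)) ⧸ N) with hE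
    set i : M →ₗ[Λᵐᵒᵖ] E := N.mkQ ∘ₗ LinearMap.inl _ _ _ with hi
    set j : ↥(P.complex.X 0) →ₗ[Λᵐᵒᵖ] E := N.mkQ ∘ₗ LinearMap.inr _ _ _ with hj
    have memN : ∀ x : ↥(P.complex.X 1), (φ x, -(d10 x)) ∈ N := fun x => ⟨x, rfl⟩
    have hNle : N ≤ LinearMap.ker (π₀.hom ∘ₗ
        LinearMap.snd Λᵐᵒᵖ ↥M ↥(P.complex.X 0)) := by
      rintro ⟨m, p⟩ ⟨x, hx⟩
      have hx2 : -(d10 x) = p := congrArg Prod.snd hx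
      have h0 : π₀ (d10 x) = 0 := ConcreteCategory.congr_hom P.complex_d_comp_π_f_zero x
      simp only [LinearMap.mem_ker, LinearMap.coe_comp, Function.comp_apply,
        LinearMap.snd_apply]
      rw [← hx2, map_neg, h0, neg_zero]
    set π' : E →ₗ[Λᵐᵒᵖ] W := N.liftQ _ hNle with hπ'
    have hπ'mk : ∀ (m : ↥M) (p : ↥(P.complex.X 0)), π' (N.mkQ (m, p)) = π₀ p := by
      intro m p; rfl
    have hizero : ∀ m : ↥M, i m = 0 → m = 0 := by
      intro m hm
      have hmem : ((m, 0) : ↥M × ↥(P.complex.X 0)) ∈ N := by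
        have hm' : N.mkQ (m, 0) = 0 := hm
        rwa [Submodule.mkQ_apply, Submodule.Quotient.mk_eq_zero] at hm'
      obtain ⟨x, hx⟩ := hmem
      have hx1 : φ x = m := congrArg Prod.fst hx
      have hx2 : -(d10 x) = 0 := congrArg Prod.snd hx
      have hxk : x ∈ LinearMap.ker d10.hom := by
        rw [LinearMap.mem_ker]; exact neg_eq_zero.mp hx2
      rw [← hker1] at hxk
      obtain ⟨y, rfl⟩ := hxk
      have := ConcreteCategory.congr_hom hφ y
      rw [← hx1]
      exact this
    have hse : ShortExact i π' := by
      refine ⟨?_, ?_, ?_⟩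
      · intro a b hab
        have : i (a - b) = 0 := by rw [map_sub, hab, sub_self]
        have := hizero _ this
        exact sub_eq_zero.mp this
      · intro y
        obtain ⟨⟨m, p⟩, rfl⟩ := N.mkQ_surjective y
        rw [hπ'mk]
        constructor
        · intro hp
          have hpk : p ∈ LinearMap.range d10.hom := by rw [hker0, LinearMap.mem_ker]; exact hp
          obtain ⟨x, rfl⟩ := hpk
          refine ⟨m + φ x, ?_⟩
          have hdiff : ((m + φ x, 0) : ↥M × ↥(P.complex.X 0)) - (m, d10 x) ∈ N := by
            refine ⟨x, ?_⟩
            have : ((m + φ x, 0) : ↥M × ↥(P.complex.X 0)) - (m, d10 x)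
                = (φ x, -(d10 x)) := by
              refine Prod.ext ?_ ?_
              · show m + φ x - m = φ x; abel
              · show 0 - d10 x = -(d10 x); abel
            rw [this]; rfl
          show N.mkQ (m + φ x, 0) = N.mkQ (m, d10 x)
          rwa [Submodule.mkQ_apply, Submodule.mkQ_apply, Submodule.Quotient.eq]
        · rintro ⟨m', hm'⟩
          have := congrArg π' hm'
          rw [hπ'mk] at this
          rw [← this]
          show π' (i m') = 0
          show π₀ 0 = 0
          exact map_zero _
      · intro w
        obtain ⟨p, hp⟩ := hπ w
        exact ⟨N.mkQ (0, p), hp ▸ hπ'mk 0 p⟩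
    have hXE : X E := hext M E W i π' hse hM hW
    have hadd : InAddOf X E := by
      refine ⟨1, fun _ => E, fun _ => hXE,
        DirectSum.lof Λᵐᵒᵖ (Fin 1) (fun _ => ↥E) 0,
        DirectSum.toModule Λᵐᵒᵖ (Fin 1) ↥E (fun _ => LinearMap.id), ?_⟩
      apply LinearMap.ext
      intro x
      show (DirectSum.toModule Λᵐᵒᵖ (Fin 1) ↥E (fun _ => LinearMap.id))
        (DirectSum.lof Λᵐᵒᵖ (Fin 1) (fun _ => ↥E) 0 x) = x
      rw [DirectSum.toModule_lof]
      rfl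
    obtain ⟨ρ, hρ⟩ := hsplit _ hadd i hse.1
    refine ⟨ModuleCat.ofHom (ρ ∘ₗ j), ?_⟩
    apply ModuleCat.hom_ext
    apply LinearMap.ext
    intro x
    have hji : j (d10 x) = i (φ x) := by
      have hdiff : ((0, d10 x) : ↥M × ↥(P.complex.X 0)) - (φ x, 0) ∈ N := by
        refine ⟨-x, ?_⟩
        refine Prod.ext ?_ ?_
        · show φ (-x) = 0 - φ x; rw [map_neg]; abel
        · show -(d10 (-x)) = d10 x - 0; rw [map_neg, neg_neg]; abel
      show N.mkQ (0, d10 x) = N.mkQ (φ x, 0)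
      rwa [Submodule.mkQ_apply, Submodule.mkQ_apply, Submodule.Quotient.eq]
    show ρ (j (d10 x)) = φ x
    rw [hji]
    exact DFunLike.congr_fun hρ (φ x)
  · -- Ext-injective → splitting injective
    intro hvan Y hY f hf
    obtain ⟨k, F, hF, s, r, hrs⟩ := hY
    let S := ModuleCat.of Λᵐᵒᵖ (DirectSum (Fin k) fun i => ↥(F i))
    have hXS : X S := hXsum k F hF
    have hsinj : Function.Injective s := by
      intro a b hab
      have h1 := LinearMap.congr_fun hrs a
      have h2 := LinearMap.congr_fun hrs b
      simp only [LinearMap.coe_comp, Function.comp_apply, LinearMap.id_apply] at h1 h2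
      rw [← h1, ← h2, hab]
    set g : M →ₗ[Λᵐᵒᵖ] S := s ∘ₗ f with hgdef
    have hg : Function.Injective g := by
      intro a b hab
      have hab' : s (f a) = s (f b) := hab
      exact hf (hsinj hab')
    set C := ModuleCat.of Λᵐᵒᵖ (↥S ⧸ LinearMap.range g) with hC
    set q : ↥S →ₗ[Λᵐᵒᵖ] ↥C := (LinearMap.range g).mkQ with hq
    have hqs : Function.Surjective q := Submodule.mkQ_surjective _
    have hker : ∀ y : ↥S, q y = 0 ↔ y ∈ LinearMap.range g := by
      intro y
      exact Submodule.Quotient.mk_eq_zero (LinearMap.range g)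
    have hseq : ShortExact g q := by
      refine ⟨hg, ?_, hqs⟩
      intro y
      rw [hker y]
      exact ⟨fun ⟨x, hx⟩ => ⟨x, hx⟩, fun ⟨x, hx⟩ => ⟨x, hx⟩⟩
    have hXC : X C := hcoker M S C g q hseq hM hXS
    obtain ⟨P⟩ : Nonempty (ProjectiveResolution C) := HasProjectiveResolution.out
    have hExt := hvan C hXC
    rw [ext1_iff' C M P] at hExt
    set π₀ := P.π.f 0 with hπ₀
    set d10 := P.complex.d 1 0 with hd10
    have hπ : Function.Surjective π₀ := res_pi0_surj C P
    have hker0 : LinearMap.range d10.hom = LinearMap.ker π₀.hom := res_range_d10 C P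
    haveI : Epi (show S ⟶ ((ChainComplex.single₀ (ModuleCat Λᵐᵒᵖ)).obj C).X 0 from ModuleCat.ofHom q) := (ModuleCat.epi_iff_surjective _).mpr hqs
    set l : P.complex.X 0 ⟶ S := Projective.factorThru π₀ (show S ⟶ ((ChainComplex.single₀ (ModuleCat Λᵐᵒᵖ)).obj C).X 0 from ModuleCat.ofHom q) with hl
    have hlq : ∀ x, q (l x) = π₀ x :=
      fun x => ConcreteCategory.congr_hom (Projective.factorThru_comp π₀ (show S ⟶ ((ChainComplex.single₀ (ModuleCat Λᵐᵒᵖ)).obj C).X 0 from ModuleCat.ofHom q)) x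
    have hmem : ∀ x, l (d10 x) ∈ LinearMap.range g := by
      intro x
      rw [← hker]
      have h0 : π₀ (d10 x) = 0 := ConcreteCategory.congr_hom P.complex_d_comp_π_f_zero x
      rw [hlq]; exact h0
    set eg := LinearEquiv.ofInjective g hg with heg
    set φ : P.complex.X 1 ⟶ M := ModuleCat.ofHom ((eg.symm.toLinearMap) ∘ₗ
      (LinearMap.codRestrict (LinearMap.range g)
        (l.hom ∘ₗ d10.hom) (fun x => hmem x))) with hφdef
    have hgφ : ∀ x, g (φ x) = l (d10 x) := by
      intro x
      show g (eg.symm ⟨l (d10 x), hmem x⟩) = l (d10 x)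
      have h1 : ∀ z : LinearMap.range g, g (eg.symm z) = ↑z := by
        intro z
        have h2 := eg.apply_symm_apply z
        calc g (eg.symm z) = ↑(eg (eg.symm z)) :=
              (LinearEquiv.ofInjective_apply (h := hg) g _).symm
          _ = ↑z := by rw [h2]
      exact h1 _
    have hφd : P.complex.d 2 1 ≫ φ = 0 := by
      apply ModuleCat.hom_ext
      apply LinearMap.ext
      intro x
      apply hg
      show g (φ (P.complex.d 2 1 x)) = g 0
      rw [hgφ, map_zero]
      have hd : d10 (P.complex.d 2 1 x) = 0 :=
        ConcreteCategory.congr_hom (P.complex.d_comp_d 2 1 0) x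
      rw [hd, map_zero]
    obtain ⟨ψ, hψ⟩ := hExt φ hφd
    set h : ↥(P.complex.X 0) →ₗ[Λᵐᵒᵖ] ↥S :=
      l.hom - g ∘ₗ ψ.hom
      with hh
    have hhd : ∀ x, h (d10 x) = 0 := by
      intro x
      show l (d10 x) - g (ψ (d10 x)) = 0
      have h1 : ψ (d10 x) = φ x := ConcreteCategory.congr_hom hψ x
      rw [h1, hgφ, sub_self]
    set eC := π₀.hom.quotKerEquivOfSurjective hπ with heC
    have hliftle : LinearMap.ker π₀.hom ≤ LinearMap.ker h := by
      rw [← hker0]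
      rintro y ⟨x, rfl⟩
      rw [LinearMap.mem_ker]
      exact hhd x
    set hbar : ↥C →ₗ[Λᵐᵒᵖ] ↥S :=
      ((LinearMap.ker π₀.hom).liftQ h hliftle) ∘ₗ
        eC.symm.toLinearMap with hhbar
    have hbar_pi : ∀ x, hbar (π₀ x) = h x := by
      intro x
      have h1 : eC ((LinearMap.ker π₀.hom).mkQ x) = π₀ x := rfl
      have h2 : eC.symm (π₀ x)
          = (LinearMap.ker π₀.hom).mkQ x := by
        rw [← h1, eC.symm_apply_apply]
      show ((LinearMap.ker π₀.hom).liftQ h hliftle)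
        (eC.symm (π₀ x)) = h x
      rw [h2]
      rfl
    have hqhbar : ∀ x, q (hbar (π₀ x)) = π₀ x := by
      intro x
      rw [hbar_pi]
      show q (l x - g (ψ x)) = π₀ x
      rw [map_sub, hlq]
      have h0 : q (g (ψ x)) = 0 := (hker _).mpr ⟨ψ x, rfl⟩
      rw [h0]; exact sub_zero _
    have hmem2 : ∀ y : ↥S, y - hbar (q y) ∈ LinearMap.range g := by
      intro y
      rw [← hker]
      obtain ⟨x, hx⟩ := hπ (q y)
      rw [map_sub, ← hx, hqhbar, hx, sub_self]
    set ρ : ↥S →ₗ[Λᵐᵒᵖ] ↥M := eg.symm.toLinearMap ∘ₗ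
      LinearMap.codRestrict (LinearMap.range g) (LinearMap.id - hbar ∘ₗ q) hmem2 with hρdef
    have hρg : ∀ m, ρ (g m) = m := by
      intro m
      show eg.symm ⟨g m - hbar (q (g m)), hmem2 (g m)⟩ = m
      have hq0 : q (g m) = 0 := (hker _).mpr ⟨m, rfl⟩
      have heq : (⟨g m - hbar (q (g m)), hmem2 (g m)⟩ :
          LinearMap.range g) = eg m := by
        apply Subtype.ext
        show g m - hbar (q (g m)) = ↑(eg m)
        rw [hq0, map_zero, sub_zero]
        exact (LinearEquiv.ofInjective_apply (h := hg) g m).symm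
      rw [heq, eg.symm_apply_apply]
    refine ⟨ρ ∘ₗ s, ?_⟩
    apply LinearMap.ext
    intro m
    exact hρg m
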